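/- Let W₁ be a complex Hilbert space with real structure, and let L₀₁ = graph(Q₁) ⊆ W₁ ⊕ (−W₁) where Q₁ is a bounded ℂ-linear operator with Q₁* = conj(Q₁)^{-1} (in particular Q₁ is invertible), and let L₁₂ ⊆ W₁ ⊕ (−W₂) be any Lagrangian. Then the composition L₀₁ ∘ L₁₂ is a Lagrangian. -/

import Mathlib

noncomputable section

/-- A real structure on a complex inner product space: an anti-unitary involution `v ↦ v̄`. -/
structure RealStructure (W : Type*) [NormedAddCommGroup W] [InnerProductSpace ℂ W] where
  conj : W → W
  map_add : ∀ v w : W, conj (v + w) = conj v + conj w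
  map_smul : ∀ (c : ℂ) (v : W), conj (c • v) = (starRingEnd ℂ) c • conj v
  invol : ∀ v : W, conj (conj v) = v
  inner_conj : ∀ v w : W, (inner ℂ (conj v) (conj w) : ℂ) = (starRingEnd ℂ) (inner ℂ v w : ℂ)

/-- The real structure of `A ⊕ (−B)`. -/
def pairConj {A B : Type*} [NormedAddCommGroup A] [InnerProductSpace ℂ A]
    [NormedAddCommGroup B] [InnerProductSpace ℂ B]
    (rA : RealStructure A) (rB : RealStructure B) : A × B → A × B :=
  fun p => (rA.conj p.1, -rB.conj p.2)

/-- The Hermitian inner product of `A ⊕ B`. -/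
def pairInner {A B : Type*} [NormedAddCommGroup A] [InnerProductSpace ℂ A]
    [NormedAddCommGroup B] [InnerProductSpace ℂ B] (x y : A × B) : ℂ :=
  (inner ℂ x.1 y.1 : ℂ) + (inner ℂ x.2 y.2 : ℂ)

/-- A Lagrangian `L ⊆ A ⊕ (−B)`. -/
def IsLagrangianPair {A B : Type*} [NormedAddCommGroup A] [InnerProductSpace ℂ A]
    [NormedAddCommGroup B] [InnerProductSpace ℂ B]
    (rA : RealStructure A) (rB : RealStructure B) (L : Submodule ℂ (A × B)) : Prop :=
  pairConj rA rB '' (L : Set (A × B)) = {y : A × B | ∀ x ∈ L, pairInner x y = 0}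

/-- The composition of two linear relations `L₀₁ ⊆ W₀ × W₁`, `L₁₂ ⊆ W₁ × W₂`. -/
def composeRel {W₀ W₁ W₂ : Type*} [NormedAddCommGroup W₀] [InnerProductSpace ℂ W₀]
    [NormedAddCommGroup W₁] [InnerProductSpace ℂ W₁]
    [NormedAddCommGroup W₂] [InnerProductSpace ℂ W₂]
    (L01 : Submodule ℂ (W₀ × W₁)) (L12 : Submodule ℂ (W₁ × W₂)) :
    Submodule ℂ (W₀ × W₂) where
  carrier := {p | ∃ w₁ : W₁, (p.1, w₁) ∈ L01 ∧ (w₁, p.2) ∈ L12}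
  add_mem' := by
    rintro a b ⟨w, hw1, hw2⟩ ⟨w', hw1', hw2'⟩
    exact ⟨w + w', L01.add_mem hw1 hw1', L12.add_mem hw2 hw2'⟩
  zero_mem' := ⟨0, L01.zero_mem, L12.zero_mem⟩
  smul_mem' := by
    rintro c a ⟨w, hw1, hw2⟩
    exact ⟨c • w, L01.smul_mem c hw1, L12.smul_mem c hw2⟩

variable {W₁ W₂ : Type*}
  [NormedAddCommGroup W₁] [InnerProductSpace ℂ W₁] [CompleteSpace W₁]
  [NormedAddCommGroup W₂] [InnerProductSpace ℂ W₂] [CompleteSpace W₂]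

/-- If `L₀₁` is the graph of a bounded operator `Q₁` with `Q₁* = conj(Q₁)⁻¹`
(in particular `Q₁` is invertible), and `L₁₂` is any Lagrangian, then the
composition `L₀₁ ∘ L₁₂` is a Lagrangian. -/
theorem composition_lagrangian_of_bounded_graph
    (r₁ : RealStructure W₁) (r₂ : RealStructure W₂)
    (Q₁ : W₁ →L[ℂ] W₁)
    -- Q₁* = conj(Q₁)⁻¹, i.e. conj(Q₁) ∘ Q₁* = id and Q₁* ∘ conj(Q₁) = id:
    (hQ₁ : ∀ v : W₁, r₁.conj (Q₁ (r₁.conj (ContinuousLinearMap.adjoint Q₁ v))) = v)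
    (hQ₂ : ∀ v : W₁, ContinuousLinearMap.adjoint Q₁ (r₁.conj (Q₁ (r₁.conj v))) = v)
    (L12 : Submodule ℂ (W₁ × W₂)) (h12 : IsLagrangianPair r₁ r₂ L12) :
    IsLagrangianPair r₁ r₂ (composeRel (LinearMap.graph (Q₁ : W₁ →ₗ[ℂ] W₁)) L12) := by
  classical
  -- `S = conj ∘ Q₁ ∘ conj`, the inverse of `Q₁*`
  set S : W₁ → W₁ := fun v => r₁.conj (Q₁ (r₁.conj v)) with hSdef
  have hinv : ∀ v : W₁, Q₁ (r₁.conj ((ContinuousLinearMap.adjoint Q₁) (r₁.conj v))) = v := by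
    intro v
    have h := hQ₁ (r₁.conj v)
    calc Q₁ (r₁.conj ((ContinuousLinearMap.adjoint Q₁) (r₁.conj v)))
        = r₁.conj (r₁.conj (Q₁ (r₁.conj ((ContinuousLinearMap.adjoint Q₁) (r₁.conj v))))) :=
          (r₁.invol _).symm
      _ = r₁.conj (r₁.conj v) := by rw [h]
      _ = v := r₁.invol v
  have hadj : ∀ a c : W₁, (inner ℂ a c : ℂ) = inner ℂ (Q₁ a) (S c) := by
    intro a c
    conv_lhs => rw [← hQ₂ c]
    exact ContinuousLinearMap.adjoint_inner_right Q₁ a _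
  unfold IsLagrangianPair at h12 ⊢
  rw [Set.ext_iff] at h12
  ext ⟨c, d⟩
  have hmem1 : (c, d) ∈ pairConj r₁ r₂ ''
        ((composeRel (LinearMap.graph (Q₁ : W₁ →ₗ[ℂ] W₁)) L12 : Submodule ℂ (W₁ × W₂)) :
          Set (W₁ × W₂)) ↔
      (S c, d) ∈ pairConj r₁ r₂ '' (L12 : Set (W₁ × W₂)) := by
    constructor
    · rintro ⟨⟨a, b⟩, ⟨w, hw1, hw2⟩, hy⟩
      rw [LinearMap.mem_graph_iff] at hw1
      simp only at hw1
      subst hw1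
      refine ⟨(Q₁ a, b), hw2, ?_⟩
      simp only [pairConj] at hy ⊢
      obtain ⟨hc, hd⟩ := Prod.mk.injEq .. ▸ hy
      rw [← hc, ← hd]
      simp [hSdef, r₁.invol]
    · rintro ⟨⟨u, b⟩, hub, hy⟩
      simp only [pairConj] at hy
      obtain ⟨hc, hd⟩ := Prod.mk.injEq .. ▸ hy
      have hu : u = Q₁ (r₁.conj c) := by
        have := congrArg r₁.conj hc
        rw [r₁.invol] at this
        rw [this, hSdef]; simp [r₁.invol]
      refine ⟨(r₁.conj c, b), ⟨u, ?_, hub⟩, ?_⟩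
      · rw [LinearMap.mem_graph_iff]
        simpa using hu
      · simp only [pairConj, r₁.invol, hd]
  have hmem2 : ((c, d) ∈ {y : W₁ × W₂ | ∀ x ∈ composeRel (LinearMap.graph (Q₁ : W₁ →ₗ[ℂ] W₁)) L12,
        pairInner x y = 0}) ↔
      (S c, d) ∈ {y : W₁ × W₂ | ∀ x ∈ L12, pairInner x y = 0} := by
    constructor
    · intro h
      rintro ⟨u, b⟩ hub
      have ha : (⟨r₁.conj ((ContinuousLinearMap.adjoint Q₁) (r₁.conj u)), b⟩ : W₁ × W₂) ∈
          composeRel (LinearMap.graph (Q₁ : W₁ →ₗ[ℂ] W₁)) L12 := by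
        refine ⟨u, ?_, hub⟩
        rw [LinearMap.mem_graph_iff]
        simpa using (hinv u).symm
      have h0 := h _ ha
      unfold pairInner at h0 ⊢
      rw [hadj] at h0
      rwa [hinv u] at h0
    · intro h
      rintro ⟨a, b⟩ ⟨w, hw1, hw2⟩
      rw [LinearMap.mem_graph_iff] at hw1
      simp only at hw1
      subst hw1
      have h0 := h _ hw2
      unfold pairInner at h0 ⊢
      rw [hadj]
      exact h0
  exact hmem1.trans <| (h12 (S c, d)).trans hmem2.symm
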